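/- Let d ≥ 2 and let u, v be words in the language (a^{d-1}b)*·a^{d-2} over alphabet {a,b}. If d divides both |u|+2 and |v|+2, then u·a·b·v = v·a·b·u. -/

import Mathlib

private lemma key {A : Type*} (a b : A) (d : ℕ) (hd : 2 ≤ d) (k m : ℕ) :
    (List.flatten (List.replicate k (List.replicate (d - 1) a ++ [b]))
        ++ List.replicate (d - 2) a) ++ [a, b]
      ++ (List.flatten (List.replicate m (List.replicate (d - 1) a ++ [b]))
        ++ List.replicate (d - 2) a)
    = List.flatten (List.replicate (k + 1 + m) (List.replicate (d - 1) a ++ [b]))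
        ++ List.replicate (d - 2) a := by
  have h1 : List.replicate (d - 2) a ++ [a, b] = List.replicate (d - 1) a ++ [b] := by
    have : d - 1 = (d - 2) + 1 := by omega
    rw [this, List.replicate_succ']
    simp
  rw [List.replicate_add, List.replicate_add, List.flatten_append, List.flatten_append]
  simp only [List.replicate_one, List.flatten_cons, List.flatten_nil, List.append_nil]
  calc (List.flatten (List.replicate k (List.replicate (d - 1) a ++ [b]))
        ++ List.replicate (d - 2) a) ++ [a, b]
      ++ (List.flatten (List.replicate m (List.replicate (d - 1) a ++ [b]))
        ++ List.replicate (d - 2) a)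
      = List.flatten (List.replicate k (List.replicate (d - 1) a ++ [b]))
        ++ (List.replicate (d - 2) a ++ [a, b])
        ++ (List.flatten (List.replicate m (List.replicate (d - 1) a ++ [b]))
        ++ List.replicate (d - 2) a) := by simp [List.append_assoc]
    _ = _ := by rw [h1]; simp [List.append_assoc]

theorem stmt_3 {A : Type*} (a b : A) (hab : a ≠ b) (d : ℕ) (hd : 2 ≤ d) (u v : List A)
    (hu : ∃ k : ℕ, u = List.flatten (List.replicate k (List.replicate (d - 1) a ++ [b]))
            ++ List.replicate (d - 2) a)
    (hv : ∃ k : ℕ, v = List.flatten (List.replicate k (List.replicate (d - 1) a ++ [b]))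
            ++ List.replicate (d - 2) a)
    (hdu : d ∣ u.length + 2) (hdv : d ∣ v.length + 2) :
    u ++ [a, b] ++ v = v ++ [a, b] ++ u := by
  obtain ⟨k, rfl⟩ := hu
  obtain ⟨m, rfl⟩ := hv
  rw [key a b d hd k m, key a b d hd m k]
  ring_nf
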